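/- Let k be a field and 𝔤 a perfect Lie algebra over k, with counit ε : U(𝔤) → k. Then every k-algebra automorphism φ of U(𝔤) satisfies ε ∘ φ = ε; consequently φ maps ker ε onto ker ε, and φ maps Z(U(𝔤)) ∩ ker ε onto Z(U(𝔤)) ∩ ker ε, where Z(U(𝔤)) denotes the center of U(𝔤). -/

import Mathlib

attribute [local instance] LieRing.ofAssociativeRing

theorem aux_hom_kills_iota
    (k : Type*) (L : Type*) [Field k] [LieRing L] [LieAlgebra k L]
    (hperf : LieAlgebra.derivedSeries k L 1 = ⊤)
    (ψ : UniversalEnvelopingAlgebra k L →ₐ[k] k) :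
    ∀ x : L, ψ (UniversalEnvelopingAlgebra.ι k x) = 0 := by
  have hbr : ∀ x y : L, ψ (UniversalEnvelopingAlgebra.ι k ⁅x, y⁆) = 0 := by
    intro x y
    have h : UniversalEnvelopingAlgebra.ι k ⁅x, y⁆ =
        UniversalEnvelopingAlgebra.ι k x * UniversalEnvelopingAlgebra.ι k y -
        UniversalEnvelopingAlgebra.ι k y * UniversalEnvelopingAlgebra.ι k x := by
      rw [← Ring.lie_def]; exact LieHom.map_lie _ _ _
    rw [h, map_sub, map_mul, map_mul]
    ring
  intro x
  have hx : x ∈ LieSubmodule.toSubmodule (⁅(⊤ : LieIdeal k L), (⊤ : LieIdeal k L)⁆ : LieIdeal k L) := by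
    have : (⁅(⊤ : LieIdeal k L), (⊤ : LieIdeal k L)⁆ : LieIdeal k L) = ⊤ := by
      have := hperf
      rw [LieAlgebra.derivedSeries_def, LieAlgebra.derivedSeriesOfIdeal_succ,
        LieAlgebra.derivedSeriesOfIdeal_zero] at this
      exact this
    rw [this]; trivial
  have hle : LieSubmodule.toSubmodule (⁅(⊤ : LieIdeal k L), (⊤ : LieIdeal k L)⁆ : LieIdeal k L) ≤
      LinearMap.ker ((ψ.toLinearMap).comp (UniversalEnvelopingAlgebra.ι k).toLinearMap) := by
    rw [LieSubmodule.lieIdeal_oper_eq_linear_span', Submodule.span_le]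
    rintro m ⟨a, -, b, -, rfl⟩
    simpa using hbr a b
  simpa using hle hx

theorem aux_hom_eq
    (k : Type*) (L : Type*) [Field k] [LieRing L] [LieAlgebra k L]
    (hperf : LieAlgebra.derivedSeries k L 1 = ⊤)
    (ε : UniversalEnvelopingAlgebra k L →ₐ[k] k)
    (hε : ∀ x : L, ε (UniversalEnvelopingAlgebra.ι k x) = 0)
    (ψ : UniversalEnvelopingAlgebra k L →ₐ[k] k) : ψ = ε := by
  ext x
  show ψ (UniversalEnvelopingAlgebra.ι k x) = ε (UniversalEnvelopingAlgebra.ι k x)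
  rw [aux_hom_kills_iota k L hperf ψ x, hε x]

/-- For a perfect Lie algebra `𝔤` over a field `k` with counit
`ε : U(𝔤) → k`, every `k`-algebra automorphism `φ` of `U(𝔤)` satisfies `ε ∘ φ = ε`;
consequently `φ` maps `ker ε` onto `ker ε` and `Z(U(𝔤)) ∩ ker ε` onto
`Z(U(𝔤)) ∩ ker ε`. -/
theorem automorphism_preserves_augmentation
    (k : Type*) (L : Type*) [Field k] [LieRing L] [LieAlgebra k L]
    (hperf : LieAlgebra.derivedSeries k L 1 = ⊤)
    (ε : UniversalEnvelopingAlgebra k L →ₐ[k] k)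
    (hε : ∀ x : L, ε (UniversalEnvelopingAlgebra.ι k x) = 0)
    (φ : UniversalEnvelopingAlgebra k L ≃ₐ[k] UniversalEnvelopingAlgebra k L) :
    (∀ u : UniversalEnvelopingAlgebra k L, ε (φ u) = ε u) ∧
    (⇑φ '' {u | ε u = 0} = {u | ε u = 0}) ∧
    (⇑φ '' ((Subalgebra.center k (UniversalEnvelopingAlgebra k L) : Set (UniversalEnvelopingAlgebra k L)) ∩ {u | ε u = 0}) =
      (Subalgebra.center k (UniversalEnvelopingAlgebra k L) : Set (UniversalEnvelopingAlgebra k L)) ∩ {u | ε u = 0}) := by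
  have h1 : ∀ u, ε (φ u) = ε u := by
    intro u
    have := aux_hom_eq k L hperf ε hε (ε.comp φ.toAlgHom)
    calc ε (φ u) = (ε.comp φ.toAlgHom) u := rfl
    _ = ε u := by rw [this]
  have h1' : ∀ u, ε (φ.symm u) = ε u := by
    intro u
    have := h1 (φ.symm u)
    simpa using this.symm
  have hker : ⇑φ '' {u | ε u = 0} = {u | ε u = 0} := by
    ext u
    constructor
    · rintro ⟨v, hv, rfl⟩
      simpa [h1] using hv
    · intro hu
      exact ⟨φ.symm u, by simpa [h1'] using hu, by simp⟩
  have hcen : ⇑φ '' (Subalgebra.center k (UniversalEnvelopingAlgebra k L) : Set (UniversalEnvelopingAlgebra k L)) =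
      (Subalgebra.center k (UniversalEnvelopingAlgebra k L) : Set (UniversalEnvelopingAlgebra k L)) := by
    have hfwd : ∀ (e : UniversalEnvelopingAlgebra k L ≃ₐ[k] UniversalEnvelopingAlgebra k L)
        (z : UniversalEnvelopingAlgebra k L),
        z ∈ Subalgebra.center k (UniversalEnvelopingAlgebra k L) →
        e z ∈ Subalgebra.center k (UniversalEnvelopingAlgebra k L) := by
      intro e z hz
      rw [Subalgebra.mem_center_iff] at hz ⊢
      intro a
      have := hz (e.symm a)
      calc a * e z = e (e.symm a) * e z := by simp
      _ = e (e.symm a * z) := by rw [map_mul]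
      _ = e (z * e.symm a) := by rw [this]
      _ = e z * a := by rw [map_mul]; simp
    ext u
    constructor
    · rintro ⟨v, hv, rfl⟩
      exact hfwd φ v hv
    · intro hu
      exact ⟨φ.symm u, hfwd φ.symm u hu, by simp⟩
  refine ⟨h1, hker, ?_⟩
  rw [Set.image_inter φ.injective, hker, hcen]
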